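/- (No-separation EM update bounds.) For β ≥ 0 and ν ∈ ℝ define T(ν, β) := (1/π)·∫_ℝ tanh(ν − β·x)·K₀(|x|) dx and S(ν, β) := (1/π)·∫_ℝ tanh(β·x − ν)·x·K₀(|x|) dx. Then: (i) |T(ν, β)| ≤ |tanh ν| and T(ν, β) has the same sign as ν (in particular, if tanh ν′ = T(ν, β) then |ν′| ≤ |ν| and sgn ν′ = sgn ν); (ii) 0 ≤ S(ν, β) ≤ 2/π, with S(ν, β) > 0 whenever β > 0. -/

import Mathlib

open Real

/-- The modified Bessel function of the second kind of order 0: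
`K₀ z = ∫₀^∞ exp (-z cosh t) dt`. -/
noncomputable def K0 (z : ℝ) : ℝ := ∫ t in Set.Ioi (0 : ℝ), Real.exp (-z * Real.cosh t)

open MeasureTheory Set Filter

section Aux

lemma sinh_le_cosh' (x : ℝ) : Real.sinh x ≤ Real.cosh x := by
  nlinarith [Real.cosh_sub_sinh x, Real.exp_pos (-x)]

lemma abs_tanh_le_one' (x : ℝ) : |Real.tanh x| ≤ 1 := by
  rw [Real.tanh_eq_sinh_div_cosh, abs_div, abs_of_pos (Real.cosh_pos x),
    div_le_one (Real.cosh_pos x), Real.abs_sinh, ← Real.cosh_abs]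
  exact sinh_le_cosh' _

lemma tanh_add_tanh' (a b : ℝ) :
    Real.tanh a + Real.tanh b = Real.sinh (a + b) / (Real.cosh a * Real.cosh b) := by
  rw [Real.tanh_eq_sinh_div_cosh, Real.tanh_eq_sinh_div_cosh, Real.sinh_add]
  field_simp

lemma tanh_strictMono' : StrictMono Real.tanh := by
  intro a b hab
  have h := tanh_add_tanh' b (-a)
  rw [Real.tanh_neg, Real.cosh_neg] at h
  have h2 : 0 < Real.sinh (b + -a) := Real.sinh_pos_iff.mpr (by linarith)
  have h3 : 0 < Real.sinh (b + -a) / (Real.cosh b * Real.cosh a) :=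
    div_pos h2 (by positivity)
  linarith

lemma abs_tanh' (x : ℝ) : |Real.tanh x| = Real.tanh |x| := by
  rcases le_total 0 x with h | h
  · rw [abs_of_nonneg h, abs_of_nonneg]
    simpa using tanh_strictMono'.monotone h
  · rw [abs_of_nonpos h, abs_of_nonpos, ← Real.tanh_neg]
    simpa using tanh_strictMono'.monotone h

lemma sign_tanh' (x : ℝ) : Real.sign (Real.tanh x) = Real.sign x := by
  rcases lt_trichotomy x 0 with h | rfl | h
  · have h' : Real.tanh x < 0 := by simpa using tanh_strictMono' h
    rw [Real.sign_of_neg h', Real.sign_of_neg h]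
  · simp [Real.tanh_zero]
  · have h' : 0 < Real.tanh x := by simpa using tanh_strictMono' h
    rw [Real.sign_of_pos h', Real.sign_of_pos h]

lemma cosh_mul_cosh_ge' (s u : ℝ) :
    Real.cosh s ^ 2 ≤ Real.cosh (s - u) * Real.cosh (s + u) := by
  rw [Real.cosh_sub, Real.cosh_add]
  nlinarith [Real.cosh_sq s, Real.cosh_sq u, sq_nonneg (Real.sinh u), sq_nonneg (Real.sinh s)]

lemma key_eq' (s u : ℝ) :
    Real.tanh (s - u) + Real.tanh (s + u)
      = Real.sinh (2 * s) / (Real.cosh (s - u) * Real.cosh (s + u)) := by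
  have h : s - u + (s + u) = 2 * s := by ring
  rw [tanh_add_tanh', h]

lemma key_pos' {s : ℝ} (u : ℝ) (hs : 0 < s) :
    0 < Real.tanh (s - u) + Real.tanh (s + u) := by
  rw [key_eq']
  exact div_pos (Real.sinh_pos_iff.mpr (by linarith)) (by positivity)

lemma key_abs' (s u : ℝ) :
    |Real.tanh (s - u) + Real.tanh (s + u)| ≤ 2 * |Real.tanh s| := by
  rw [key_eq', abs_div]
  have hD : (0:ℝ) < Real.cosh (s - u) * Real.cosh (s + u) := by positivity
  rw [abs_of_pos hD, Real.tanh_eq_sinh_div_cosh, abs_div, abs_of_pos (Real.cosh_pos s)]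
  have hnum : |Real.sinh (2 * s)| = 2 * |Real.sinh s| * Real.cosh s := by
    rw [Real.sinh_two_mul, abs_mul, abs_mul, abs_two, abs_of_pos (Real.cosh_pos s)]
  rw [hnum]
  have h2 := cosh_mul_cosh_ge' s u
  have hc := Real.cosh_pos s
  calc 2 * |Real.sinh s| * Real.cosh s / (Real.cosh (s - u) * Real.cosh (s + u))
      ≤ 2 * |Real.sinh s| * Real.cosh s / Real.cosh s ^ 2 := by
        gcongr
      _ = 2 * (|Real.sinh s| / Real.cosh s) := by
        field_simp

end Aux

section MT

lemma cosh_ge_self' {t : ℝ} (ht : 0 ≤ t) : t ≤ Real.cosh t :=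
  (Real.self_le_sinh_iff.mpr ht).trans (sinh_le_cosh' t)

lemma expcosh_integrable {z : ℝ} (hz : 0 < z) :
    IntegrableOn (fun t => Real.exp (-z * Real.cosh t)) (Ioi 0) := by
  refine (exp_neg_integrableOn_Ioi 0 hz).mono' ?_ ?_
  · exact Continuous.aestronglyMeasurable (by continuity)
  · filter_upwards [ae_restrict_mem measurableSet_Ioi] with t ht
    rw [Real.norm_eq_abs, abs_of_pos (Real.exp_pos _)]
    apply Real.exp_le_exp.mpr
    have := cosh_ge_self' (le_of_lt ht)
    nlinarith

lemma K0_nonneg (z : ℝ) : 0 ≤ K0 z :=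
  integral_nonneg fun t => (Real.exp_pos _).le

lemma K0_pos {z : ℝ} (hz : 0 < z) : 0 < K0 z := by
  rw [K0, integral_pos_iff_support_of_nonneg (fun t => (Real.exp_pos _).le)
    (expcosh_integrable hz)]
  have hsupp : Function.support (fun t => Real.exp (-z * Real.cosh t)) = Set.univ := by
    ext t; simp [Function.support, (Real.exp_pos _).ne']
  rw [hsupp]
  simp [Real.volume_Ioi]

lemma K0_sm : StronglyMeasurable K0 := by
  have hc : Continuous (Function.uncurry fun z t : ℝ => Real.exp (-z * Real.cosh t)) :=
    Real.continuous_exp.comp ((continuous_fst.neg).mul (Real.continuous_cosh.comp continuous_snd))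
  have h : StronglyMeasurable (Function.uncurry fun z t : ℝ => Real.exp (-z * Real.cosh t)) :=
    hc.stronglyMeasurable
  exact h.integral_prod_right

lemma integral_exp_c {c : ℝ} (hc : 0 < c) :
    ∫ x in Ioi (0:ℝ), Real.exp (-(c * x)) = 1 / c := by
  have h := integral_rpow_mul_exp_neg_mul_Ioi one_pos hc
  simpa using h

lemma integral_x_exp_c {c : ℝ} (hc : 0 < c) :
    ∫ x in Ioi (0:ℝ), x * Real.exp (-(c * x)) = 1 / c ^ 2 := by
  have h := integral_rpow_mul_exp_neg_mul_Ioi two_pos hc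
  rw [show (2:ℝ) - 1 = 1 by norm_num] at h
  simp only [Real.rpow_one, Real.Gamma_two, mul_one] at h
  rw [h, show (2:ℝ) = ((2:ℕ):ℝ) by norm_num, Real.rpow_natCast, div_pow, one_pow]

lemma x_exp_integrable {c : ℝ} (hc : 0 < c) :
    IntegrableOn (fun x => x * Real.exp (-(c * x))) (Ioi 0) := by
  have hint : IntegrableOn (fun x => Real.exp (-(c/2) * x)) (Ioi 0) :=
    exp_neg_integrableOn_Ioi 0 (by positivity)
  refine (hint.const_mul (2/c)).mono' ?_ ?_
  · exact Continuous.aestronglyMeasurable (by continuity)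
  · filter_upwards [ae_restrict_mem measurableSet_Ioi] with x hx
    have hx0 : (0:ℝ) < x := hx
    rw [Real.norm_eq_abs, abs_of_nonneg (by positivity)]
    have h1 : c/2 * x ≤ Real.exp (c/2 * x) := by
      linarith [Real.add_one_le_exp (c/2 * x)]
    have h2 : x ≤ 2/c * Real.exp (c/2 * x) := by
      calc x = 2/c * (c/2 * x) := by field_simp
        _ ≤ 2/c * Real.exp (c/2 * x) := mul_le_mul_of_nonneg_left h1 (by positivity)
    calc x * Real.exp (-(c * x)) ≤ (2/c * Real.exp (c/2 * x)) * Real.exp (-(c * x)) := by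
          exact mul_le_mul_of_nonneg_right h2 (Real.exp_pos _).le
      _ = 2/c * Real.exp (-(c/2) * x) := by
          rw [mul_assoc, ← Real.exp_add]
          congr 2
          ring

end MT

section Sech

lemma sech_integrable : IntegrableOn (fun t => 1 / Real.cosh t) (Ioi (0:ℝ)) := by
  refine ((exp_neg_integrableOn_Ioi 0 one_pos).const_mul 2).mono' ?_ ?_
  · exact Continuous.aestronglyMeasurable
      (continuous_const.div Real.continuous_cosh fun x => (Real.cosh_pos x).ne')
  · refine Filter.Eventually.of_forall fun t => ?_
    have hc := Real.cosh_pos t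
    rw [Real.norm_eq_abs, abs_of_pos (by positivity), div_le_iff₀ hc]
    have h1 : Real.exp t ≤ 2 * Real.cosh t := by
      nlinarith [Real.cosh_add_sinh t, sinh_le_cosh' t]
    have h2 : Real.exp (-1 * t) * Real.exp t = 1 := by
      rw [← Real.exp_add]; norm_num
    nlinarith [Real.exp_pos (-1 * t)]

lemma sech_sq_integrable : IntegrableOn (fun t => 1 / Real.cosh t ^ 2) (Ioi (0:ℝ)) := by
  refine sech_integrable.mono' ?_ ?_
  · exact Continuous.aestronglyMeasurable
      (continuous_const.div (Real.continuous_cosh.pow 2) fun x => by positivity)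
  · refine Filter.Eventually.of_forall fun t => ?_
    have hc := Real.cosh_pos t
    have h1 := Real.one_le_cosh t
    rw [Real.norm_eq_abs, abs_of_pos (by positivity)]
    apply div_le_div_of_nonneg_left one_pos.le hc
    nlinarith

lemma sech_integral : ∫ t in Ioi (0:ℝ), 1 / Real.cosh t = π / 2 := by
  have hderiv : ∀ x ∈ Ici (0:ℝ),
      HasDerivAt (fun t => Real.arctan (Real.sinh t)) (1 / Real.cosh x) x := by
    intro x _
    have h := (Real.hasDerivAt_arctan (Real.sinh x)).comp x (Real.hasDerivAt_sinh x)
    refine h.congr_deriv ?_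
    have hc := Real.cosh_pos x
    have hsq : 1 + Real.sinh x ^ 2 = Real.cosh x ^ 2 := by
      rw [Real.cosh_sq]; ring
    rw [hsq]
    field_simp
  have htends : Filter.Tendsto (fun t => Real.arctan (Real.sinh t)) atTop (nhds (π / 2)) := by
    have hs : Filter.Tendsto Real.sinh atTop atTop := by
      apply tendsto_atTop_mono' atTop ?_ tendsto_id
      filter_upwards [eventually_ge_atTop (0:ℝ)] with x hx
      exact Real.self_le_sinh_iff.mpr hx
    exact (Real.tendsto_arctan_atTop.mono_right nhdsWithin_le_nhds).comp hs
  have h := integral_Ioi_of_hasDerivAt_of_tendsto' hderiv sech_integrable htends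
  simpa using h

lemma sech_sq_integral : ∫ t in Ioi (0:ℝ), 1 / Real.cosh t ^ 2 = 1 := by
  have hderiv : ∀ x ∈ Ici (0:ℝ),
      HasDerivAt (fun t => Real.sinh t / Real.cosh t) (1 / Real.cosh x ^ 2) x := by
    intro x _
    have h := (Real.hasDerivAt_sinh x).div (Real.hasDerivAt_cosh x) (Real.cosh_pos x).ne'
    refine h.congr_deriv ?_
    have hsq := Real.cosh_sq x
    field_simp
    nlinarith
  have htends : Filter.Tendsto (fun t => Real.sinh t / Real.cosh t) atTop (nhds 1) := by
    have key : ∀ t : ℝ, Real.sinh t / Real.cosh t = 1 - Real.exp (-t) / Real.cosh t := by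
      intro t
      have hc := (Real.cosh_pos t).ne'
      field_simp
      linarith [Real.cosh_sub_sinh t]
    have h0 : Filter.Tendsto (fun t => Real.exp (-t) / Real.cosh t) atTop (nhds 0) := by
      apply squeeze_zero (fun t => by positivity) (fun t => ?_)
        Real.tendsto_exp_neg_atTop_nhds_zero
      exact div_le_self (Real.exp_pos _).le (Real.one_le_cosh t)
    have := tendsto_const_nhds.sub h0 (f := fun _ : ℝ => (1:ℝ))
    simp only [sub_zero] at this
    exact this.congr fun t => (key t).symm
  have h := integral_Ioi_of_hasDerivAt_of_tendsto' hderiv sech_sq_integrable htends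
  simpa using h

end Sech

section Fubini


lemma prod1_integrable :
    Integrable (fun p : ℝ × ℝ => Real.exp (-p.2 * Real.cosh p.1)) (((volume : Measure ℝ).restrict (Ioi (0:ℝ))).prod ((volume : Measure ℝ).restrict (Ioi (0:ℝ)))) := by
  have hcont : Continuous (fun p : ℝ × ℝ => Real.exp (-p.2 * Real.cosh p.1)) :=
    Real.continuous_exp.comp (continuous_snd.neg.mul (Real.continuous_cosh.comp continuous_fst))
  rw [integrable_prod_iff hcont.aestronglyMeasurable]
  constructor
  · refine Filter.Eventually.of_forall fun t => ?_
    have h : (fun x : ℝ => Real.exp (-x * Real.cosh t))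
        = fun x => Real.exp (-(Real.cosh t) * x) := by
      funext x; ring_nf
    show Integrable (fun x : ℝ => Real.exp (-x * Real.cosh t)) ((volume : Measure ℝ).restrict (Ioi (0:ℝ)))
    rw [h]
    exact exp_neg_integrableOn_Ioi 0 (Real.cosh_pos t)
  · have h : (fun t : ℝ => ∫ x, ‖Real.exp (-x * Real.cosh t)‖ ∂((volume : Measure ℝ).restrict (Ioi (0:ℝ))))
        = fun t => 1 / Real.cosh t := by
      funext t
      have h1 : (fun x : ℝ => ‖Real.exp (-x * Real.cosh t)‖)
          = fun x => Real.exp (-(Real.cosh t * x)) := by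
        funext x
        rw [Real.norm_eq_abs, abs_of_pos (Real.exp_pos _)]
        ring_nf
      rw [h1]
      exact integral_exp_c (Real.cosh_pos t)
    rw [h]
    exact sech_integrable

lemma K0_integrableOn : IntegrableOn K0 (Ioi (0:ℝ)) :=
  prod1_integrable.integral_prod_right

lemma K0_integral : ∫ x in Ioi (0:ℝ), K0 x = π / 2 := by
  have hs := integral_integral_swap
    (f := fun t x : ℝ => Real.exp (-x * Real.cosh t)) (μ := ((volume : Measure ℝ).restrict (Ioi (0:ℝ)))) (ν := ((volume : Measure ℝ).restrict (Ioi (0:ℝ)))) prod1_integrable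
  have h1 : ∀ t : ℝ, (∫ x in Ioi (0:ℝ), Real.exp (-x * Real.cosh t)) = 1 / Real.cosh t := by
    intro t
    have h : (fun x : ℝ => Real.exp (-x * Real.cosh t))
        = fun x => Real.exp (-(Real.cosh t * x)) := by funext x; ring_nf
    rw [h]
    exact integral_exp_c (Real.cosh_pos t)
  have h2 : (∫ t in Ioi (0:ℝ), ∫ x in Ioi (0:ℝ), Real.exp (-x * Real.cosh t)) = π / 2 := by
    rw [integral_congr_ae (Filter.Eventually.of_forall fun t => h1 t)]
    exact sech_integral
  calc ∫ x in Ioi (0:ℝ), K0 x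
      = ∫ x in Ioi (0:ℝ), ∫ t in Ioi (0:ℝ), Real.exp (-x * Real.cosh t) := by
        simp only [K0]
    _ = ∫ t in Ioi (0:ℝ), ∫ x in Ioi (0:ℝ), Real.exp (-x * Real.cosh t) := hs.symm
    _ = π / 2 := h2

lemma prod2_integrable :
    Integrable (fun p : ℝ × ℝ => p.2 * Real.exp (-p.2 * Real.cosh p.1)) (((volume : Measure ℝ).restrict (Ioi (0:ℝ))).prod ((volume : Measure ℝ).restrict (Ioi (0:ℝ)))) := by
  have hcont : Continuous (fun p : ℝ × ℝ => p.2 * Real.exp (-p.2 * Real.cosh p.1)) :=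
    continuous_snd.mul (Real.continuous_exp.comp
      (continuous_snd.neg.mul (Real.continuous_cosh.comp continuous_fst)))
  rw [integrable_prod_iff hcont.aestronglyMeasurable]
  constructor
  · refine Filter.Eventually.of_forall fun t => ?_
    have h : (fun x : ℝ => x * Real.exp (-x * Real.cosh t))
        = fun x => x * Real.exp (-(Real.cosh t * x)) := by
      funext x; ring_nf
    show Integrable (fun x : ℝ => x * Real.exp (-x * Real.cosh t)) ((volume : Measure ℝ).restrict (Ioi (0:ℝ)))
    rw [h]
    exact x_exp_integrable (Real.cosh_pos t)
  · have h : (fun t : ℝ => ∫ x, ‖x * Real.exp (-x * Real.cosh t)‖ ∂((volume : Measure ℝ).restrict (Ioi (0:ℝ))))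
        = fun t => 1 / Real.cosh t ^ 2 := by
      funext t
      have h1 : ∫ x, ‖x * Real.exp (-x * Real.cosh t)‖ ∂((volume : Measure ℝ).restrict (Ioi (0:ℝ)))
          = ∫ x in Ioi (0:ℝ), x * Real.exp (-(Real.cosh t * x)) := by
        apply setIntegral_congr_fun measurableSet_Ioi
        intro x hx
        have hx0 : (0:ℝ) < x := hx
        show ‖x * Real.exp (-x * Real.cosh t)‖ = x * Real.exp (-(Real.cosh t * x))
        rw [Real.norm_eq_abs, abs_of_nonneg (by positivity)]
        ring_nf
      rw [h1]
      exact integral_x_exp_c (Real.cosh_pos t)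
    rw [h]
    exact sech_sq_integrable

lemma xK0_integrableOn : IntegrableOn (fun x => x * K0 x) (Ioi (0:ℝ)) := by
  have h := prod2_integrable.integral_prod_right
  refine h.congr (Filter.Eventually.of_forall fun y => ?_)
  show (∫ t, y * Real.exp (-y * Real.cosh t) ∂((volume : Measure ℝ).restrict (Ioi (0:ℝ)))) = y * K0 y
  rw [K0, integral_const_mul]

lemma xK0_integral : ∫ x in Ioi (0:ℝ), x * K0 x = 1 := by
  have hs := integral_integral_swap
    (f := fun t x : ℝ => x * Real.exp (-x * Real.cosh t)) (μ := ((volume : Measure ℝ).restrict (Ioi (0:ℝ)))) (ν := ((volume : Measure ℝ).restrict (Ioi (0:ℝ)))) prod2_integrable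
  have h1 : ∀ t : ℝ, (∫ x in Ioi (0:ℝ), x * Real.exp (-x * Real.cosh t))
      = 1 / Real.cosh t ^ 2 := by
    intro t
    have h : (fun x : ℝ => x * Real.exp (-x * Real.cosh t))
        = fun x => x * Real.exp (-(Real.cosh t * x)) := by funext x; ring_nf
    rw [h]
    exact integral_x_exp_c (Real.cosh_pos t)
  have h2 : (∫ t in Ioi (0:ℝ), ∫ x in Ioi (0:ℝ), x * Real.exp (-x * Real.cosh t)) = 1 := by
    rw [integral_congr_ae (Filter.Eventually.of_forall fun t => h1 t)]
    exact sech_sq_integral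
  rw [hs] at h2
  rw [← h2]
  apply setIntegral_congr_fun measurableSet_Ioi
  intro x _
  show x * K0 x = ∫ t, x * Real.exp (-x * Real.cosh t) ∂((volume : Measure ℝ).restrict (Ioi (0:ℝ)))
  rw [K0, integral_const_mul]

end Fubini

section Abs

lemma integrable_comp_abs' {f : ℝ → ℝ} (hf : IntegrableOn f (Ioi (0:ℝ))) :
    Integrable (fun x => f |x|) := by
  have h1 : IntegrableOn (fun x => f |x|) (Ioi (0:ℝ)) := by
    refine (hf.congr_fun (fun x hx => ?_) measurableSet_Ioi)
    rw [abs_of_pos (mem_Ioi.mp hx)]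
  have h2 : IntegrableOn (fun x => f |x|) (Iic (0:ℝ)) := by
    rw [← Measure.map_neg_eq_self (volume : Measure ℝ)]
    have m : MeasurableEmbedding fun x : ℝ => -x :=
      (Homeomorph.neg ℝ).measurableEmbedding
    rw [m.integrableOn_map_iff]
    simp_rw [Function.comp_def, abs_neg, neg_preimage, neg_Iic, neg_zero]
    exact (integrableOn_Ici_iff_integrableOn_Ioi).mpr h1
  have h3 := h2.union h1
  rwa [Iic_union_Ioi, integrableOn_univ] at h3

lemma K0abs_int : Integrable (fun x : ℝ => K0 |x|) := integrable_comp_abs' K0_integrableOn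

lemma K0abs_val : ∫ x : ℝ, K0 |x| = π := by
  rw [integral_comp_abs (f := K0), K0_integral]
  ring

lemma xK0abs_int : Integrable (fun x : ℝ => |x| * K0 |x|) :=
  integrable_comp_abs' (f := fun u => u * K0 u) xK0_integrableOn

lemma xK0abs_val : ∫ x : ℝ, |x| * K0 |x| = 2 := by
  have h := integral_comp_abs (f := fun u => u * K0 u)
  rw [xK0_integral] at h
  simpa using h

lemma K0abs_sm : StronglyMeasurable (fun x : ℝ => K0 |x|) :=
  K0_sm.comp_measurable measurable_abs

lemma continuous_tanh' : Continuous Real.tanh := by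
  have : Real.tanh = fun x => Real.sinh x / Real.cosh x :=
    funext fun x => Real.tanh_eq_sinh_div_cosh x
  rw [this]
  exact Real.continuous_sinh.div Real.continuous_cosh fun x => (Real.cosh_pos x).ne'

end Abs

section Symm

lemma integral_symmetrize {g h : ℝ → ℝ} (hg : Integrable g)
    (hgh : ∀ x, g x + g (-x) = 2 * h x) : ∫ x, g x = ∫ x, h x := by
  have hgneg : Integrable (fun x => g (-x)) := hg.comp_neg
  have e1 : ∫ x, g (-x) = ∫ x, g x := integral_neg_eq_self g volume
  have e2 := integral_add hg hgneg
  calc ∫ x, g x = (∫ x, (g x + g (-x))) / 2 := by rw [e2, e1]; ring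
    _ = (∫ x, 2 * h x) / 2 := by rw [integral_congr_ae (Filter.Eventually.of_forall hgh)]
    _ = ∫ x, h x := by rw [integral_const_mul]; ring

lemma integrable_symmetrize {g h : ℝ → ℝ} (hg : Integrable g)
    (hgh : ∀ x, g x + g (-x) = 2 * h x) : Integrable h := by
  have h2 := (hg.add hg.comp_neg).div_const 2
  refine h2.congr (Filter.Eventually.of_forall fun x => ?_)
  show (g x + g (-x)) / 2 = h x
  have := hgh x
  linarith

end Symm

/-- (No-separation EM update bounds.)  For `β ≥ 0` and `ν ∈ ℝ`, set
`T(ν,β) = (1/π) ∫_ℝ tanh(ν - βx) K₀(|x|) dx` and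
`S(ν,β) = (1/π) ∫_ℝ tanh(βx - ν) x K₀(|x|) dx`.  Then `|T| ≤ |tanh ν|`, `T` has the
same sign as `ν` (so if `tanh ν' = T` then `|ν'| ≤ |ν|` and `sgn ν' = sgn ν`), and
`0 ≤ S ≤ 2/π` with `S > 0` when `β > 0`. -/
theorem no_separation_em_bounds (β ν : ℝ) (hβ : 0 ≤ β)
    (T S : ℝ)
    (hT : T = (1 / π) * ∫ x : ℝ, Real.tanh (ν - β * x) * K0 |x|)
    (hS : S = (1 / π) * ∫ x : ℝ, Real.tanh (β * x - ν) * x * K0 |x|) :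
    (|T| ≤ |Real.tanh ν| ∧ Real.sign T = Real.sign ν ∧
      (∀ ν' : ℝ, Real.tanh ν' = T → |ν'| ≤ |ν| ∧ Real.sign ν' = Real.sign ν)) ∧
    (0 ≤ S ∧ S ≤ 2 / π ∧ (0 < β → 0 < S)) := by
  have hπ : (0:ℝ) < π := Real.pi_pos
  -- ===== T part =====
  set f1 : ℝ → ℝ := fun x => Real.tanh (ν - β * x) * K0 |x| with hf1
  have hm1 : AEStronglyMeasurable f1 volume :=
    (((continuous_tanh'.comp (by continuity)).stronglyMeasurable).mul
      K0abs_sm).aestronglyMeasurable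
  have hi1 : Integrable f1 := by
    refine K0abs_int.mono' hm1 (Filter.Eventually.of_forall fun x => ?_)
    show ‖Real.tanh (ν - β * x) * K0 |x|‖ ≤ K0 |x|
    rw [Real.norm_eq_abs, abs_mul, abs_of_nonneg (K0_nonneg _)]
    exact mul_le_of_le_one_left (K0_nonneg _) (abs_tanh_le_one' _)
  set h1 : ℝ → ℝ :=
    fun x => ((Real.tanh (ν - β * x) + Real.tanh (ν + β * x)) / 2) * K0 |x| with hh1
  have hsum1 : ∀ x, f1 x + f1 (-x) = 2 * h1 x := by
    intro x
    show Real.tanh (ν - β * x) * K0 |x| + Real.tanh (ν - β * -x) * K0 |(-x)|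
      = 2 * (((Real.tanh (ν - β * x) + Real.tanh (ν + β * x)) / 2) * K0 |x|)
    rw [abs_neg, show ν - β * -x = ν + β * x by ring]
    ring
  have hswap1 : ∫ x, f1 x = ∫ x, h1 x := integral_symmetrize hi1 hsum1
  have hih1 : Integrable h1 := integrable_symmetrize hi1 hsum1
  have habs1 : ∀ x, |h1 x| ≤ |Real.tanh ν| * K0 |x| := by
    intro x
    have hx1 : h1 x = ((Real.tanh (ν - β * x) + Real.tanh (ν + β * x)) / 2) * K0 |x| := rfl
    rw [hx1, abs_mul, abs_of_nonneg (K0_nonneg _), abs_div, abs_two]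
    apply mul_le_mul_of_nonneg_right ?_ (K0_nonneg _)
    rw [div_le_iff₀ (by norm_num : (0:ℝ) < 2)]
    calc |Real.tanh (ν - β * x) + Real.tanh (ν + β * x)| ≤ 2 * |Real.tanh ν| :=
          key_abs' ν (β * x)
      _ = |Real.tanh ν| * 2 := by ring
  have hint_bound : |∫ x, h1 x| ≤ |Real.tanh ν| * π := by
    calc |∫ x, h1 x| ≤ ∫ x, |h1 x| := by
          simpa [Real.norm_eq_abs] using norm_integral_le_integral_norm h1 (μ := volume)
      _ ≤ ∫ x, |Real.tanh ν| * K0 |x| :=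
          integral_mono hih1.abs (K0abs_int.const_mul _) habs1
      _ = |Real.tanh ν| * π := by rw [integral_const_mul, K0abs_val]
  have hTabs : |T| ≤ |Real.tanh ν| := by
    rw [hT, hswap1, abs_mul, abs_of_pos (show (0:ℝ) < 1/π by positivity)]
    calc 1/π * |∫ x, h1 x| ≤ 1/π * (|Real.tanh ν| * π) :=
          mul_le_mul_of_nonneg_left hint_bound (by positivity)
      _ = |Real.tanh ν| := by field_simp
  have hTsign : Real.sign T = Real.sign ν := by
    rcases lt_trichotomy ν 0 with hν | hν | hν
    · have hkneg : ∀ x : ℝ, Real.tanh (ν - β * x) + Real.tanh (ν + β * x) < 0 := by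
        intro x
        have hk := key_pos' (s := -ν) (β * x) (by linarith)
        rw [show -ν - β * x = -(ν + β * x) by ring, show -ν + β * x = -(ν - β * x) by ring,
          Real.tanh_neg, Real.tanh_neg] at hk
        linarith
      have hpos : ∀ x, 0 ≤ -h1 x := by
        intro x
        show 0 ≤ -(((Real.tanh (ν - β * x) + Real.tanh (ν + β * x)) / 2) * K0 |x|)
        nlinarith [K0_nonneg |x|, hkneg x]
      have hIneg : ∫ x, h1 x < 0 := by
        have h0 : 0 < ∫ x, -h1 x := by
          rw [integral_pos_iff_support_of_nonneg hpos hih1.neg]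
          refine lt_of_lt_of_le ?_
            (measure_mono (?_ : Ioi (0:ℝ) ⊆ Function.support fun x => -h1 x))
          · simp [Real.volume_Ioi]
          · intro x hx
            have hx0 : (0:ℝ) < x := hx
            have hK := K0_pos (abs_pos.mpr hx0.ne')
            have h2 : 0 < -h1 x := by
              show 0 < -(((Real.tanh (ν - β * x) + Real.tanh (ν + β * x)) / 2) * K0 |x|)
              nlinarith [hkneg x]
            exact h2.ne'
        rw [integral_neg] at h0
        linarith
      have hTneg : T < 0 := by
        rw [hT, hswap1]
        exact mul_neg_of_pos_of_neg (by positivity) hIneg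
      rw [Real.sign_of_neg hTneg, Real.sign_of_neg hν]
    · subst hν
      have hzero : h1 = fun _ => (0:ℝ) := by
        funext x
        show ((Real.tanh (0 - β * x) + Real.tanh (0 + β * x)) / 2) * K0 |x| = 0
        rw [zero_sub, zero_add, Real.tanh_neg]
        ring
      have hT0 : T = 0 := by
        rw [hT, hswap1, hzero, integral_zero, mul_zero]
      simp [hT0]
    · have hkpos : ∀ x : ℝ, 0 < Real.tanh (ν - β * x) + Real.tanh (ν + β * x) :=
        fun x => key_pos' (β * x) hν
      have hpos : ∀ x, 0 ≤ h1 x := by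
        intro x
        show 0 ≤ ((Real.tanh (ν - β * x) + Real.tanh (ν + β * x)) / 2) * K0 |x|
        nlinarith [K0_nonneg |x|, hkpos x]
      have hIpos : 0 < ∫ x, h1 x := by
        rw [integral_pos_iff_support_of_nonneg hpos hih1]
        refine lt_of_lt_of_le ?_
          (measure_mono (?_ : Ioi (0:ℝ) ⊆ Function.support h1))
        · simp [Real.volume_Ioi]
        · intro x hx
          have hx0 : (0:ℝ) < x := hx
          have hK := K0_pos (abs_pos.mpr hx0.ne')
          have h2 : 0 < h1 x := by
            show 0 < ((Real.tanh (ν - β * x) + Real.tanh (ν + β * x)) / 2) * K0 |x|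
            nlinarith [hkpos x]
          exact h2.ne'
      have hTpos : 0 < T := by
        rw [hT, hswap1]
        exact mul_pos (by positivity) hIpos
      rw [Real.sign_of_pos hTpos, Real.sign_of_pos hν]
  have hcl : ∀ ν' : ℝ, Real.tanh ν' = T → |ν'| ≤ |ν| ∧ Real.sign ν' = Real.sign ν := by
    intro ν' hv
    constructor
    · have h1' : |Real.tanh ν'| ≤ |Real.tanh ν| := by rw [hv]; exact hTabs
      rw [abs_tanh', abs_tanh'] at h1'
      exact tanh_strictMono'.le_iff_le.mp h1'
    · rw [← sign_tanh' ν', hv, hTsign]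
  -- ===== S part =====
  set f2 : ℝ → ℝ := fun x => Real.tanh (β * x - ν) * x * K0 |x| with hf2
  have hm2 : AEStronglyMeasurable f2 volume :=
    ((((continuous_tanh'.comp (by continuity)).mul continuous_id).stronglyMeasurable).mul
      K0abs_sm).aestronglyMeasurable
  have hi2 : Integrable f2 := by
    refine xK0abs_int.mono' hm2 (Filter.Eventually.of_forall fun x => ?_)
    show ‖Real.tanh (β * x - ν) * x * K0 |x|‖ ≤ |x| * K0 |x|
    rw [Real.norm_eq_abs, abs_mul, abs_mul, abs_of_nonneg (K0_nonneg _)]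
    apply mul_le_mul_of_nonneg_right ?_ (K0_nonneg _)
    exact mul_le_of_le_one_left (abs_nonneg x) (abs_tanh_le_one' _)
  set h2f : ℝ → ℝ :=
    fun x => (x * ((Real.tanh (β * x - ν) + Real.tanh (β * x + ν)) / 2)) * K0 |x| with hh2
  have hsum2 : ∀ x, f2 x + f2 (-x) = 2 * h2f x := by
    intro x
    show Real.tanh (β * x - ν) * x * K0 |x| + Real.tanh (β * -x - ν) * (-x) * K0 |(-x)|
      = 2 * ((x * ((Real.tanh (β * x - ν) + Real.tanh (β * x + ν)) / 2)) * K0 |x|)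
    rw [abs_neg, show β * -x - ν = -(β * x + ν) by ring, Real.tanh_neg]
    ring
  have hswap2 : ∫ x, f2 x = ∫ x, h2f x := integral_symmetrize hi2 hsum2
  have hih2 : Integrable h2f := integrable_symmetrize hi2 hsum2
  have hkey2 : ∀ x : ℝ, 0 ≤ x * ((Real.tanh (β * x - ν) + Real.tanh (β * x + ν)) / 2) := by
    intro x
    rcases lt_trichotomy x 0 with hx | rfl | hx
    · rcases eq_or_lt_of_le hβ with hb | hb
      · rw [← hb]
        simp [zero_mul, zero_sub, zero_add, Real.tanh_neg]
      · have hk := key_pos' (s := -(β * x)) ν (by nlinarith)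
        rw [show -(β * x) - ν = -(β * x + ν) by ring,
          show -(β * x) + ν = -(β * x - ν) by ring, Real.tanh_neg, Real.tanh_neg] at hk
        nlinarith
    · simp
    · rcases eq_or_lt_of_le hβ with hb | hb
      · rw [← hb]
        simp [zero_mul, zero_sub, zero_add, Real.tanh_neg]
      · have hk := key_pos' (s := β * x) ν (by positivity)
        nlinarith
  have hpos2 : ∀ x, 0 ≤ h2f x := by
    intro x
    show 0 ≤ (x * ((Real.tanh (β * x - ν) + Real.tanh (β * x + ν)) / 2)) * K0 |x|
    exact mul_nonneg (hkey2 x) (K0_nonneg _)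
  have hS0 : 0 ≤ S := by
    rw [hS, hswap2]
    exact mul_nonneg (by positivity) (integral_nonneg hpos2)
  have hSle : S ≤ 2 / π := by
    have hb : ∫ x, h2f x ≤ ∫ x, |x| * K0 |x| := by
      refine integral_mono hih2 xK0abs_int fun x => ?_
      show (x * ((Real.tanh (β * x - ν) + Real.tanh (β * x + ν)) / 2)) * K0 |x|
        ≤ |x| * K0 |x|
      apply mul_le_mul_of_nonneg_right ?_ (K0_nonneg _)
      calc x * ((Real.tanh (β * x - ν) + Real.tanh (β * x + ν)) / 2)
          ≤ |x * ((Real.tanh (β * x - ν) + Real.tanh (β * x + ν)) / 2)| := le_abs_self _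
        _ = |x| * |(Real.tanh (β * x - ν) + Real.tanh (β * x + ν)) / 2| := abs_mul _ _
        _ ≤ |x| * 1 := by
            apply mul_le_mul_of_nonneg_left ?_ (abs_nonneg x)
            rw [abs_div, abs_two, div_le_one (by norm_num : (0:ℝ) < 2)]
            calc |Real.tanh (β * x - ν) + Real.tanh (β * x + ν)|
                ≤ |Real.tanh (β * x - ν)| + |Real.tanh (β * x + ν)| := abs_add_le _ _
              _ ≤ 1 + 1 := add_le_add (abs_tanh_le_one' _) (abs_tanh_le_one' _)
              _ = 2 := by norm_num
        _ = |x| := mul_one _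
    rw [hS, hswap2]
    calc (1/π) * ∫ x, h2f x ≤ (1/π) * 2 := by
          apply mul_le_mul_of_nonneg_left (hb.trans_eq xK0abs_val) (by positivity)
      _ = 2 / π := by ring
  have hSpos : 0 < β → 0 < S := by
    intro hbp
    rw [hS, hswap2]
    apply mul_pos (by positivity)
    rw [integral_pos_iff_support_of_nonneg hpos2 hih2]
    refine lt_of_lt_of_le ?_
      (measure_mono (?_ : Ioi (0:ℝ) ⊆ Function.support h2f))
    · simp [Real.volume_Ioi]
    · intro x hx
      have hx0 : (0:ℝ) < x := hx
      have hk := key_pos' (s := β * x) ν (by positivity)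
      have hK := K0_pos (abs_pos.mpr hx0.ne')
      have h2 : 0 < h2f x := by
        show 0 < (x * ((Real.tanh (β * x - ν) + Real.tanh (β * x + ν)) / 2)) * K0 |x|
        exact mul_pos (mul_pos hx0 (by linarith)) hK
      exact h2.ne'
  exact ⟨⟨hTabs, hTsign, hcl⟩, hS0, hSle, hSpos⟩
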